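/- For all integers K ≥ 1 and N ≥ K + 3, and every real α₀ > 0: ∫_{α₀}^∞ (N + α − 1) · Γ(α+K)/Γ(α+N) dα ≤ Γ(α₀+K) / ( (N−K−2) · Γ(N+α₀−2) ). -/

import Mathlib

open MeasureTheory Filter Topology

lemma gamma_prod_aux (α : ℝ) (hα : 0 < α) (K : ℕ) :
    ∀ M, K ≤ M → Real.Gamma (α + M) = Real.Gamma (α + K) * ∏ j ∈ Finset.Ico K M, (α + j) := by
  intro M hM
  induction M, hM using Nat.le_induction with
  | base => simp
  | succ M hM ih =>
    rw [Finset.prod_Ico_succ_top hM]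
    have h1 : (α + ((M + 1 : ℕ) : ℝ)) = (α + M) + 1 := by push_cast; ring
    rw [h1, Real.Gamma_add_one (by positivity : (0:ℝ) < α + M).ne', ih]
    ring

/-- **Tail integral bound.** For integers `K ≥ 1`, `N ≥ K + 3` and real `α₀ > 0`:
`∫_{α₀}^∞ (N + α − 1) Γ(α+K)/Γ(α+N) dα ≤ Γ(α₀+K)/((N−K−2) Γ(N+α₀−2))`. -/
theorem gamma_ratio_tail_integral_bound (K N : ℕ) (hK : 1 ≤ K) (hN : K + 3 ≤ N)
    (α₀ : ℝ) (hα₀ : 0 < α₀) :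
    ∫ α in Set.Ioi α₀, ((N : ℝ) + α - 1) * (Real.Gamma (α + K) / Real.Gamma (α + N))
      ≤ Real.Gamma (α₀ + K) / (((N : ℝ) - K - 2) * Real.Gamma ((N : ℝ) + α₀ - 2)) := by
  have hN4 : 4 ≤ N := by omega
  set s : Finset ℕ := Finset.Ico K (N - 2) with hs
  have hcard : s.card = N - 2 - K := by simp [hs]
  set g : ℝ → ℝ := fun x => ∏ j ∈ s, (x + j)⁻¹ with hgdef
  set G' : ℝ → ℝ := fun x => ∑ i ∈ s, (∏ j ∈ s.erase i, (x + j)⁻¹) * ((x + i) ^ 2)⁻¹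
    with hG'def
  have hgpos : ∀ x : ℝ, 0 < x → 0 < g x := by
    intro x hx
    exact Finset.prod_pos fun j _ => by positivity
  have hgP : ∀ x : ℝ, g x = (∏ j ∈ s, (x + (j:ℝ)))⁻¹ := by
    intro x; simp [hgdef, Finset.prod_inv_distrib]
  -- derivative of -g is G'
  have hderiv : ∀ x ∈ Set.Ici α₀, HasDerivAt (fun y => -g y) (G' x) x := by
    intro x hx
    have hx0 : 0 < x := lt_of_lt_of_le hα₀ hx
    have h1 : ∀ i ∈ s, HasDerivAt (fun y : ℝ => (y + i)⁻¹) (-(((x + i) ^ 2)⁻¹)) x := by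
      intro i _
      have h := ((hasDerivAt_id x).add_const (i : ℝ)).inv (by positivity : (0:ℝ) < x + i).ne'
      simpa [neg_div, one_div, Pi.inv_def] using h
    have h2 := (HasDerivAt.fun_finsetProd h1).neg
    refine h2.congr_deriv ?_
    simp [hG'def, smul_eq_mul, mul_neg]
  have hG'nonneg : ∀ x ∈ Set.Ioi α₀, 0 ≤ G' x := by
    intro x hx
    have hx0 : 0 < x := lt_trans hα₀ hx
    refine Finset.sum_nonneg fun i _ => ?_
    have h1 : 0 ≤ ∏ j ∈ s.erase i, (x + (j:ℝ))⁻¹ :=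
      Finset.prod_nonneg fun j _ => by positivity
    positivity
  have htends : Tendsto (fun y => -g y) atTop (𝓝 0) := by
    have h0 : Tendsto g atTop (𝓝 (∏ _j ∈ s, (0:ℝ))) := by
      apply tendsto_finset_prod
      intro j _
      exact (tendsto_atTop_add_const_right atTop (j:ℝ) tendsto_id).inv_tendsto_atTop
    rw [Finset.prod_const, zero_pow (by rw [hcard]; omega : s.card ≠ 0)] at h0
    simpa using h0.neg
  have hint : ∫ x in Set.Ioi α₀, G' x = g α₀ := by
    have h := integral_Ioi_of_hasDerivAt_of_nonneg' hderiv hG'nonneg htends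
    simpa using h
  have hintegrable : IntegrableOn G' (Set.Ioi α₀) volume :=
    integrableOn_Ioi_deriv_of_nonneg' hderiv hG'nonneg htends
  set m : ℕ := N - 2 - K with hm
  have hm1 : 1 ≤ m := by omega
  have hm0 : (0:ℝ) < m := by exact_mod_cast hm1
  -- pointwise value of the integrand
  have hfval : ∀ x : ℝ, 0 < x →
      ((N : ℝ) + x - 1) * (Real.Gamma (x + K) / Real.Gamma (x + N))
        = g x * (x + ((N - 2 : ℕ) : ℝ))⁻¹ := by
    intro x hx
    have hΓK : Real.Gamma (x + K) ≠ 0 := (Real.Gamma_pos_of_pos (by positivity)).ne'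
    have hgam := gamma_prod_aux x hx K N (by omega)
    have e1 : ∏ j ∈ Finset.Ico K N, (x + (j:ℝ))
        = (∏ j ∈ s, (x + (j:ℝ))) * (x + ((N-2 : ℕ):ℝ)) * (x + ((N-1 : ℕ):ℝ)) := by
      rw [show N = (N - 2) + 1 + 1 by omega,
        Finset.prod_Ico_succ_top (by omega), Finset.prod_Ico_succ_top (by omega),
        show N - 2 + 1 + 1 - 2 = N - 2 by omega, show N - 2 + 1 + 1 - 1 = N - 2 + 1 by omega]
    have hcastN1 : ((N:ℝ) + x - 1) = x + ((N-1:ℕ):ℝ) := by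
      rw [Nat.cast_sub (by omega)]; push_cast; ring
    have hP : (0:ℝ) < ∏ j ∈ s, (x + (j:ℝ)) := Finset.prod_pos fun j _ => by positivity
    have hx1 : (0:ℝ) < x + ((N-1:ℕ):ℝ) := by positivity
    have hx2 : (0:ℝ) < x + ((N-2:ℕ):ℝ) := by positivity
    have hN' : (4:ℝ) ≤ (N:ℝ) := by exact_mod_cast hN4
    have hx3 : (0:ℝ) < x + ((N:ℝ) - 1) := by linarith
    have hΓKpos : (0:ℝ) < Real.Gamma (x + K) := Real.Gamma_pos_of_pos (by positivity)
    rw [hgam, e1, hcastN1, hgP]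
    field_simp
  -- pointwise comparison with G'
  have hcomp : ∀ x : ℝ, 0 < x →
      ((N : ℝ) + x - 1) * (Real.Gamma (x + K) / Real.Gamma (x + N)) ≤ (m:ℝ)⁻¹ * G' x := by
    intro x hx
    have hx2 : (0:ℝ) < x + ((N-2:ℕ):ℝ) := by positivity
    have key : (s.card) • (g x * (x + ((N-2:ℕ):ℝ))⁻¹) ≤ G' x := by
      refine Finset.card_nsmul_le_sum s _ _ fun i hi => ?_
      have hiN : (i:ℝ) ≤ ((N-2:ℕ):ℝ) := by
        have : i < N - 2 := (Finset.mem_Ico.mp hi).2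
        exact_mod_cast this.le
      have hxi : (0:ℝ) < x + i := by positivity
      have hterm : (∏ j ∈ s.erase i, (x + (j:ℝ))⁻¹) * ((x + i) ^ 2)⁻¹
          = g x * (x + (i:ℝ))⁻¹ := by
        rw [sq, mul_inv, ← mul_assoc, Finset.prod_erase_mul s _ hi, hgdef]
      rw [hterm]
      have hinv : (x + ((N-2:ℕ):ℝ))⁻¹ ≤ (x + (i:ℝ))⁻¹ :=
        inv_anti₀ hxi (by linarith)
      exact mul_le_mul_of_nonneg_left hinv (hgpos x hx).le
    rw [nsmul_eq_mul, hcard] at key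
    rw [hfval x hx, inv_mul_eq_div, le_div_iff₀' hm0]
    exact key
  -- nonnegativity of integrand
  have hf0 : 0 ≤ᵐ[volume.restrict (Set.Ioi α₀)]
      fun α => ((N : ℝ) + α - 1) * (Real.Gamma (α + K) / Real.Gamma (α + N)) := by
    filter_upwards [self_mem_ae_restrict measurableSet_Ioi] with x hx
    have hx0 : 0 < x := lt_trans hα₀ hx
    rw [hfval x hx0]
    have := hgpos x hx0
    positivity
  have hle : (fun α => ((N : ℝ) + α - 1) * (Real.Gamma (α + K) / Real.Gamma (α + N)))
      ≤ᵐ[volume.restrict (Set.Ioi α₀)] fun x => (m:ℝ)⁻¹ * G' x := by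
    filter_upwards [self_mem_ae_restrict measurableSet_Ioi] with x hx
    exact hcomp x (lt_trans hα₀ hx)
  have hmain : ∫ α in Set.Ioi α₀, ((N : ℝ) + α - 1) * (Real.Gamma (α + K) / Real.Gamma (α + N))
      ≤ (m:ℝ)⁻¹ * g α₀ := by
    calc ∫ α in Set.Ioi α₀, ((N : ℝ) + α - 1) * (Real.Gamma (α + K) / Real.Gamma (α + N))
        ≤ ∫ x in Set.Ioi α₀, (m:ℝ)⁻¹ * G' x :=
          integral_mono_of_nonneg hf0 (hintegrable.const_mul _) hle
      _ = (m:ℝ)⁻¹ * g α₀ := by rw [integral_const_mul, hint]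
  -- rewrite the RHS
  have hRHS : Real.Gamma (α₀ + K) / (((N : ℝ) - K - 2) * Real.Gamma ((N : ℝ) + α₀ - 2))
      = (m:ℝ)⁻¹ * g α₀ := by
    have hc : (N:ℝ) + α₀ - 2 = α₀ + ((N-2:ℕ):ℝ) := by
      rw [Nat.cast_sub (by omega)]; push_cast; ring
    have hmc : ((N:ℝ) - K - 2) = (m:ℝ) := by
      rw [hm, Nat.cast_sub (by omega), Nat.cast_sub (by omega)]; push_cast; ring
    have hΓK : (0:ℝ) < Real.Gamma (α₀ + K) := Real.Gamma_pos_of_pos (by positivity)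
    have hP : (0:ℝ) < ∏ j ∈ s, (α₀ + (j:ℝ)) := Finset.prod_pos fun j _ => by positivity
    rw [hc, hmc, gamma_prod_aux α₀ hα₀ K (N-2) (by omega), hgP]
    field_simp
    rw [← hs]
  rw [hRHS]
  exact hmain
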